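/- In a pseudo-Garside germ, every greedy element of Gⁿ is a greatest element (with respect to the preorder ≲ generated by the rewriting relation) of its equivalence class; in particular, any two equivalent greedy elements are strongly equivalent. -/
import Mathlib


/-- A pseudo-Garside germ `(G, H, ≤, w₀)`: groups `H ⊆ G`, a lattice order on
`G/H` (encoded by the preorder `lesim` on `G`, writing `a ≲ b` for `aH ≤ bH`)
with least element `H` and greatest element `w₀H`, satisfying (PG2) and (PG3).
`a*b` is defined (and equals `ab`) iff `lesim a (a*b)`. -/
structure PseudoGarsideGerm (G : Type*) [Group G] where
  H : Subgroup G
  lesim : G → G → Prop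
  w₀ : G
  refl : ∀ a, lesim a a
  trans : ∀ a b c, lesim a b → lesim b c → lesim a c
  /-- `≤` is antisymmetric as an order on cosets. -/
  antisymm : ∀ a b, lesim a b → lesim b a → a⁻¹ * b ∈ H
  /-- `lesim` only depends on the cosets. -/
  coset_congr : ∀ a b h h', h ∈ H → h' ∈ H → lesim a b → lesim (a * h) (b * h')
  /-- `H` is the least element. -/
  least : ∀ a, lesim 1 a
  /-- `w₀H` is the greatest element. -/
  greatest : ∀ a, lesim a w₀
  /-- Any two cosets have a join. -/
  sup_exists : ∀ a b, ∃ d, lesim a d ∧ lesim b d ∧ ∀ e, lesim a e → lesim b e → lesim d e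
  /-- Any two cosets have a meet. -/
  inf_exists : ∀ a b, ∃ d, lesim d a ∧ lesim d b ∧ ∀ e, lesim e a → lesim e b → lesim e d
  /-- (PG2): `(a*b)*c` is defined iff `a*(b*c)` is. -/
  pg2 : ∀ a b c, (lesim a (a * b) ∧ lesim (a * b) (a * b * c)) ↔
    (lesim b (b * c) ∧ lesim a (a * b * c))
  /-- (PG3): `a ≲ b` iff `w₀aw₀⁻¹ ≲ w₀bw₀⁻¹`. -/
  pg3 : ∀ a b, lesim a b ↔ lesim (w₀ * a * w₀⁻¹) (w₀ * b * w₀⁻¹)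

/-- The rewriting relation on the free monoid `G*` (words over `G`):
`u (a)(b*c) v → u (a*b)(c) v` whenever `a*b` and `b*c` are defined. -/
def GermRw {G : Type*} [Group G] (Γ : PseudoGarsideGerm G) (u v : List G) : Prop :=
  ∃ (p q : List G) (a b c : G), Γ.lesim a (a * b) ∧ Γ.lesim b (b * c) ∧
    u = p ++ [a, b * c] ++ q ∧ v = p ++ [a * b, c] ++ q

/-- `≲` on words: the reflexive-transitive closure of the rewriting relation. -/
def GermLe {G : Type*} [Group G] (Γ : PseudoGarsideGerm G) : List G → List G → Prop :=
  Relation.ReflTransGen (GermRw Γ)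

/-- Strong equivalence `∼` on words: `x ≲ y` and `y ≲ x`. -/
def GermSim {G : Type*} [Group G] (Γ : PseudoGarsideGerm G) (x y : List G) : Prop :=
  GermLe Γ x y ∧ GermLe Γ y x

/-- A word is greedy if `x → y` implies `x ∼ y`. -/
def Greedy {G : Type*} [Group G] (Γ : PseudoGarsideGerm G) (x : List G) : Prop :=
  ∀ y, GermRw Γ x y → GermSim Γ x y



namespace Stmt14Aux

variable {G : Type*} [Group G] (Γ : PseudoGarsideGerm G)

/-- `a*u` is defined iff `u ≲ a⁻¹w₀`. -/
lemma defined_iff (a u : G) :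
    Γ.lesim a (a * u) ↔ Γ.lesim u (a⁻¹ * Γ.w₀) := by
  have h := Γ.pg2 a u ((a * u)⁻¹ * Γ.w₀)
  have e1 : a * u * ((a * u)⁻¹ * Γ.w₀) = Γ.w₀ := by group
  have e2 : u * ((a * u)⁻¹ * Γ.w₀) = a⁻¹ * Γ.w₀ := by group
  rw [e1, e2] at h
  constructor
  · intro hd; exact (h.mp ⟨hd, Γ.greatest _⟩).1
  · intro hd; exact (h.mpr ⟨hd, Γ.greatest _⟩).1

/-- Resolution step for the same-position critical pair: push up to an upper bound `d`. -/
lemma join_step (p q : List G) (a b c d : G)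
    (h1 : Γ.lesim a (a * b)) (h2 : Γ.lesim b (b * c))
    (hbd : Γ.lesim b d) (hdbc : Γ.lesim d (b * c)) (had : Γ.lesim a (a * d)) :
    GermRw Γ (p ++ [a * b, c] ++ q) (p ++ [a * d, d⁻¹ * (b * c)] ++ q) := by
  clear h1 h2
  refine ⟨p, q, a * b, b⁻¹ * d, d⁻¹ * (b * c), ?_, ?_, ?_, ?_⟩
  · have h := Γ.pg2 a b (b⁻¹ * d)
    rw [show b * (b⁻¹ * d) = d by group, show a * b * (b⁻¹ * d) = a * d by group] at h
    rw [show a * b * (b⁻¹ * d) = a * d by group]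
    exact (h.mpr ⟨hbd, had⟩).2
  · have h := Γ.pg2 b (b⁻¹ * d) (d⁻¹ * (b * c))
    rw [show b * (b⁻¹ * d) = d by group,
        show d * (d⁻¹ * (b * c)) = b * c by group] at h
    exact (h.mp ⟨hbd, hdbc⟩).1
  · rw [show b⁻¹ * d * (d⁻¹ * (b * c)) = c by group]
  · rw [show a * b * (b⁻¹ * d) = a * d by group]

/-- Resolution of the adjacent-overlap critical pair. -/
lemma adj_step (p q : List G) (a b c b' c' : G)
    (h1 : Γ.lesim a (a * b)) (h2 : Γ.lesim b (b * c))
    (h3 : Γ.lesim (b * c) (b * c * b')) (h4 : Γ.lesim b' (b' * c')) :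
    GermRw Γ (p ++ [a * b, c, b' * c'] ++ q) (p ++ [a * b, c * b', c'] ++ q) ∧
    GermRw Γ (p ++ [a, b * c * b', c'] ++ q) (p ++ [a * b, c * b', c'] ++ q) := by
  have h := Γ.pg2 b c b'
  have hcb' : Γ.lesim c (c * b') := (h.mp ⟨h2, h3⟩).1
  have hbcb' : Γ.lesim b (b * (c * b')) := by
    have := (h.mp ⟨h2, h3⟩).2
    rwa [show b * c * b' = b * (c * b') by group] at this
  constructor
  · refine ⟨p ++ [a * b], q, c, b', c', hcb', h4, ?_, ?_⟩ <;> simp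
  · refine ⟨p, c' :: q, a, b, c * b', h1, hbcb', ?_, ?_⟩ <;>
      simp [show b * c * b' = b * (c * b') by group]

lemma list_decomp {α : Type*} {p q p' q' : List α} {x y x' y' : α}
    (h : p ++ [x, y] ++ q = p' ++ [x', y'] ++ q') :
    (p = p' ∧ x = x' ∧ y = y' ∧ q = q') ∨
    (p' = p ++ [x] ∧ y = x' ∧ q = y' :: q') ∨
    (p = p' ++ [x'] ∧ y' = x ∧ q' = y :: q) ∨
    (∃ r, p' = p ++ [x, y] ++ r ∧ q = r ++ [x', y'] ++ q') ∨
    (∃ r, p = p' ++ [x', y'] ++ r ∧ q' = r ++ [x, y] ++ q) := by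
  rw [List.append_assoc, List.append_assoc, List.append_eq_append_iff] at h
  rcases h with ⟨m, hm1, hm2⟩ | ⟨m, hm1, hm2⟩
  · rcases m with _ | ⟨u, _ | ⟨v, m⟩⟩
    · left; simp_all
    · right; left; simp_all
    · right; right; right; left
      refine ⟨m, ?_, ?_⟩ <;> simp_all
  · rcases m with _ | ⟨u, _ | ⟨v, m⟩⟩
    · left; simp_all
    · right; right; left; simp_all
    · right; right; right; right
      refine ⟨m, ?_, ?_⟩ <;> simp_all

/-- The rewriting relation has the diamond property. -/
lemma diamond {z z₁ w : List G} (hA : GermRw Γ z z₁) (hB : GermRw Γ z w) :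
    ∃ t, Relation.ReflGen (GermRw Γ) z₁ t ∧ Relation.ReflGen (GermRw Γ) w t := by
  obtain ⟨p, q, a, b, c, h1, h2, hz, hz1⟩ := hA
  obtain ⟨p', q', a', b', c', h1', h2', hz', hw⟩ := hB
  rw [hz] at hz'
  subst hz1; subst hw
  rcases list_decomp hz' with ⟨hp, ha, hbc, hq⟩ | ⟨hp, hbc, hq⟩ | ⟨hp, hbc, hq⟩ |
    ⟨r, hp, hq⟩ | ⟨r, hp, hq⟩
  · -- same position
    subst hp; subst ha; subst hq
    obtain ⟨d, hbd, hb'd, hmin⟩ := Γ.sup_exists b b'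
    have hb'bc : Γ.lesim b' (b * c) := by rw [hbc]; exact h2'
    have hub : Γ.lesim d (b * c) := hmin _ h2 hb'bc
    have had : Γ.lesim a (a * d) := (defined_iff Γ a d).mpr
      (hmin _ ((defined_iff Γ a b).mp h1) ((defined_iff Γ a b').mp h1'))
    refine ⟨p ++ [a * d, d⁻¹ * (b * c)] ++ q, Relation.ReflGen.single ?_,
      Relation.ReflGen.single ?_⟩
    · exact join_step Γ p q a b c d h1 h2 hbd hub had
    · have := join_step Γ p q a b' c' d h1' h2' hb'd (by rw [← hbc]; exact hub) had
      rwa [← hbc] at this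
  · -- adjacent: second rewrite to the right
    subst hp; subst hq; subst hbc
    have h := adj_step Γ p q' a b c b' c' h1 h2 h1' h2'
    refine ⟨p ++ [a * b, c * b', c'] ++ q', Relation.ReflGen.single ?_,
      Relation.ReflGen.single ?_⟩
    · have e : p ++ [a * b, c] ++ (b' * c' :: q') = p ++ [a * b, c, b' * c'] ++ q' := by simp
      rw [e]; exact h.1
    · have e : (p ++ [a]) ++ [b * c * b', c'] ++ q' = p ++ [a, b * c * b', c'] ++ q' := by
        simp
      rw [e]; exact h.2
  · -- adjacent: second rewrite to the left
    subst hp; subst hq; subst hbc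
    have h := adj_step Γ p' q a' b' c' b c h1' h2' h1 h2
    refine ⟨p' ++ [a' * b', c' * b, c] ++ q, Relation.ReflGen.single ?_,
      Relation.ReflGen.single ?_⟩
    · have e : (p' ++ [a']) ++ [b' * c' * b, c] ++ q = p' ++ [a', b' * c' * b, c] ++ q := by
        simp
      rw [e]; exact h.2
    · have e : p' ++ [a' * b', c'] ++ (b * c :: q) = p' ++ [a' * b', c', b * c] ++ q := by
        simp
      rw [e]; exact h.1
  · -- disjoint, second to the right
    subst hp; subst hq
    exact ⟨p ++ [a * b, c] ++ r ++ [a' * b', c'] ++ q',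
      Relation.ReflGen.single ⟨p ++ [a * b, c] ++ r, q', a', b', c', h1', h2',
        by simp, by simp⟩,
      Relation.ReflGen.single ⟨p, r ++ [a' * b', c'] ++ q', a, b, c, h1, h2,
        by simp, by simp⟩⟩
  · -- disjoint, second to the left
    subst hp; subst hq
    exact ⟨p' ++ [a' * b', c'] ++ r ++ [a * b, c] ++ q,
      Relation.ReflGen.single ⟨p', r ++ [a * b, c] ++ q, a', b', c', h1', h2',
        by simp, by simp⟩,
      Relation.ReflGen.single ⟨p' ++ [a' * b', c'] ++ r, q, a, b, c, h1, h2,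
        by simp, by simp⟩⟩

/-- Reducts of elements below a greedy `x` stay below `x`. -/
lemma step_le {x : List G} (hx : Greedy Γ x) :
    ∀ {z}, GermLe Γ z x → ∀ w, GermRw Γ z w → GermLe Γ w x := by
  intro z hzx
  induction hzx using Relation.ReflTransGen.head_induction_on with
  | refl => intro w hw; exact (hx w hw).2
  | head hstep htail ih =>
    intro w hw
    obtain ⟨t, h1, h2⟩ := diamond Γ hstep hw
    have htx : GermLe Γ t x := by
      cases h1 with
      | refl => exact htail
      | single h => exact ih _ h
    cases h2 with
    | refl => exact htx
    | single h => exact Relation.ReflTransGen.head h htx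

lemma eqvgen_le {x : List G} (hx : Greedy Γ x) :
    ∀ {u v : List G}, Relation.EqvGen (GermRw Γ) u v → (GermLe Γ u x ↔ GermLe Γ v x) := by
  intro u v h
  induction h with
  | rel a b hab =>
      exact ⟨fun h => step_le Γ hx h b hab, fun h => Relation.ReflTransGen.head hab h⟩
  | refl a => exact Iff.rfl
  | symm a b _ ih => exact ih.symm
  | trans a b c _ _ ih1 ih2 => exact ih1.trans ih2

end Stmt14Aux

/-- Every greedy element is a greatest element (w.r.t. `≲`) of its
`≈`-equivalence class; in particular two equivalent greedy elements are
strongly equivalent. -/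
theorem stmt14 {G : Type*} [Group G] (Γ : PseudoGarsideGerm G) (x : List G)
    (hx : Greedy Γ x) :
    ∀ y, Relation.EqvGen (GermRw Γ) x y →
      GermLe Γ y x ∧ (Greedy Γ y → GermSim Γ x y) := by
  intro y hxy
  have hyx : GermLe Γ y x := (Stmt14Aux.eqvgen_le Γ hx hxy).mp Relation.ReflTransGen.refl
  exact ⟨hyx, fun hy =>
    ⟨(Stmt14Aux.eqvgen_le Γ hy (Relation.EqvGen.symm _ _ hxy)).mp Relation.ReflTransGen.refl,
      hyx⟩⟩
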